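/- With K the closed unit ball of the norm ‖(x,y)‖' = sup{‖x‖_p, ‖y‖_p, |x_α|+|y_β| : (α,β) ∈ G} on ℓ_p(Γ)², and 1 < ξ ≤ 2^{1−1/p}: if (α,β) ∉ G then the element (x,y) with x_α = x_β = y_α = y_β = 2^{−1/p} and all other coordinates 0 lies in K and satisfies |x_α|+|y_α| > ξ−ε and |x_β|+|y_β| > ξ−ε for appropriate ξ; conversely, if (α,β) ∈ G (α ≠ β) then no (x,y) ∈ K satisfies both |x_α|+|y_α| > ξ₁ and |x_β|+|y_β| > ξ₁ for any ξ₁ > 1. -/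

import Mathlib

open Cardinal
open scoped ENNReal Classical

theorem aux_sym {W : Type*} [LinearOrder W] (φ : W → ℝ) (hφ : Function.Injective φ)
    {a b : W} (hab : a ≠ b) :
    ((φ a < φ b ↔ a ≤ b) ↔ (φ b < φ a ↔ b ≤ a)) := by
  have h1 : φ a ≠ φ b := fun h => hab (hφ h)
  have h2 : φ b < φ a ↔ ¬ (φ a < φ b) := by
    constructor
    · intro h; exact not_lt.mpr h.le
    · intro h; exact lt_of_le_of_ne (not_lt.mp h) h1.symm
  have h3 : b ≤ a ↔ ¬ (a ≤ b) := by
    constructor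
    · intro h hc; exact hab (le_antisymm hc h)
    · intro h; exact (not_le.mp h).le
  rw [h2, h3]
  tauto

/-- With `K` the unit ball of `‖(x,y)‖' = sup{‖x‖_p,‖y‖_p,|x_α|+|y_β| : (α,β) ∈ G}` on
`ℓ_p(Γ)²`: if `(α,β) ∉ G` then the element with `x_α = x_β = y_α = y_β = 2^{-1/p}` and
all other coordinates `0` lies in `K` and has `|x_α|+|y_α| = |x_β|+|y_β| = 2^{1-1/p}`
(hence `> ξ` for any `ξ < 2^{1-1/p}`); conversely if `(α,β) ∈ G` with `α ≠ β` then no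
`(x,y) ∈ K` has both `|x_α|+|y_α| > ξ₁` and `|x_β|+|y_β| > ξ₁` for any `ξ₁ > 1`. -/
theorem stmt16 (Γ : Type*) (p : ℝ≥0∞) [Fact (1 ≤ p)] (hp : 1 < p) (hp' : p ≠ ⊤)
    (W : Type*) [LinearOrder W] [WellFoundedLT W] (hcard : #W = aleph 1) (e : W ↪ Γ)
    (φ : W → ℝ) (hφ : Function.Injective φ)
    (G : Set (W × W)) (hG : G = {q : W × W | φ q.1 < φ q.2 ↔ q.1 ≤ q.2})
    (N : lp (fun _ : Γ => ℝ) p → lp (fun _ : Γ => ℝ) p → ℝ)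
    (hN : ∀ x y, N x y
      = sSup ({‖x‖, ‖y‖} ∪ {t : ℝ | ∃ q ∈ G, t = |x.1 (e q.1)| + |y.1 (e q.2)|}))
    (α β : W) (hαβ : α ≠ β) :
    ((α, β) ∉ G →
      ∃ x y : lp (fun _ : Γ => ℝ) p,
        N x y ≤ 1 ∧
        (∀ γ, x.1 γ = if γ = e α ∨ γ = e β then (2 : ℝ) ^ (-(1 / p.toReal)) else 0) ∧
        (∀ γ, y.1 γ = if γ = e α ∨ γ = e β then (2 : ℝ) ^ (-(1 / p.toReal)) else 0) ∧
        |x.1 (e α)| + |y.1 (e α)| = (2 : ℝ) ^ (1 - 1 / p.toReal) ∧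
        |x.1 (e β)| + |y.1 (e β)| = (2 : ℝ) ^ (1 - 1 / p.toReal) ∧
        ∀ ξ : ℝ, ξ < (2 : ℝ) ^ (1 - 1 / p.toReal) →
          ξ < |x.1 (e α)| + |y.1 (e α)| ∧ ξ < |x.1 (e β)| + |y.1 (e β)|) ∧
    ((α, β) ∈ G → ∀ ξ₁ : ℝ, 1 < ξ₁ →
      ¬ ∃ x y : lp (fun _ : Γ => ℝ) p,
        N x y ≤ 1 ∧ ξ₁ < |x.1 (e α)| + |y.1 (e α)| ∧ ξ₁ < |x.1 (e β)| + |y.1 (e β)|) := by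
  have hp0 : p ≠ 0 := (zero_lt_one.trans hp).ne'
  have hpt1 : 1 < p.toReal := by
    have := (ENNReal.toReal_lt_toReal (by norm_num : (1:ℝ≥0∞) ≠ ⊤) hp').mpr hp
    simpa using this
  have hpt0 : 0 < p.toReal := by linarith
  set pt := p.toReal with hptdef
  set c : ℝ := (2 : ℝ) ^ (-(1 / pt)) with hc
  have hc0 : 0 < c := Real.rpow_pos_of_pos two_pos _
  have hc1 : c ≤ 1 := Real.rpow_le_one_of_one_le_of_nonpos one_le_two
    (neg_nonpos.mpr (by positivity))
  have hcp : c ^ pt = 1 / 2 := by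
    rw [hc, ← Real.rpow_mul (by norm_num : (0:ℝ) ≤ 2)]
    have he : -(1 / pt) * pt = -1 := by field_simp
    rw [he, Real.rpow_neg_one]
    norm_num
  have h2c : c + c = (2:ℝ) ^ (1 - 1/pt) := by
    rw [show (1 - 1/pt : ℝ) = 1 + (-(1/pt)) by ring, Real.rpow_add two_pos, Real.rpow_one, hc]
    ring
  have hdiag : ∀ γ : W, (γ, γ) ∉ G := by
    intro γ hγ
    rw [hG] at hγ
    simp only [Set.mem_setOf_eq, le_refl, iff_true, lt_self_iff_false] at hγ
  constructor
  · -- forward direction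
    intro hαβG
    have hβαG : (β, α) ∉ G := by
      rw [hG] at hαβG ⊢
      simp only [Set.mem_setOf_eq] at *
      exact fun h => hαβG ((aux_sym φ hφ hαβ).mpr h)
    have heαβ : e α ≠ e β := fun h => hαβ (e.injective h)
    set f : Γ → ℝ := fun γ => if γ = e α ∨ γ = e β then c else 0 with hf
    have hsupp : {γ | f γ ≠ 0} ⊆ {e α, e β} := by
      intro γ hγ
      simp only [hf, Set.mem_setOf_eq, ne_eq, ite_eq_right_iff, not_forall] at hγ
      obtain ⟨h, -⟩ := hγ
      simpa [Set.mem_insert_iff, Set.mem_singleton_iff] using h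
    have hmem : Memℓp f p :=
      (memℓp_zero (((Set.finite_singleton (e β)).insert (e α)).subset hsupp)).of_exponent_ge
        (zero_le : (0 : ℝ≥0∞) ≤ p)
    set x : lp (fun _ : Γ => ℝ) p := ⟨f, hmem⟩ with hx
    have hxapp : ∀ γ, x.1 γ = f γ := fun γ => rfl
    have hfα : f (e α) = c := if_pos (Or.inl rfl)
    have hfβ : f (e β) = c := if_pos (Or.inr rfl)
    have habs : ∀ z, |f z| ≤ c := by
      intro z
      by_cases h : z = e α ∨ z = e β <;>
        simp [hf, h, abs_of_nonneg hc0.le, hc0.le]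
    -- norm of x
    have hnorm_pow : ‖x‖ ^ pt = 1 := by
      rw [lp.norm_rpow_eq_tsum hpt0 x]
      have htsum : ∑' γ, ‖x.1 γ‖ ^ pt = ∑ γ ∈ ({e α, e β} : Finset Γ), ‖x.1 γ‖ ^ pt := by
        refine tsum_eq_sum ?_
        intro b hb
        simp only [Finset.mem_insert, Finset.mem_singleton, not_or] at hb
        have : f b = 0 := by simp [hf, hb.1, hb.2]
        rw [hxapp, this]
        simp [Real.zero_rpow hpt0.ne']
      rw [show (fun i => ‖x i‖ ^ pt) = (fun i => ‖x.1 i‖ ^ pt) from rfl, htsum,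
        Finset.sum_pair heαβ, hxapp, hxapp, hfα, hfβ, Real.norm_of_nonneg hc0.le, hcp]
      norm_num
    have hxnorm : ‖x‖ ≤ 1 := by
      by_contra h
      push_neg at h
      have := (Real.one_lt_rpow_iff_of_pos (lt_trans zero_lt_one h)).mpr (Or.inl ⟨h, hpt0⟩)
      rw [hnorm_pow] at this
      exact lt_irrefl 1 this
    refine ⟨x, x, ?_, hxapp, hxapp, ?_, ?_, ?_⟩
    · rw [hN]
      refine Real.sSup_le ?_ zero_le_one
      rintro t (ht | ⟨q, hqG, rfl⟩)
      · rcases ht with rfl | rfl <;> exact hxnorm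
      · -- key inequality: at most one of the two coordinates is nonzero
        have hkey : q.1 ∉ ({α, β} : Set W) ∨ q.2 ∉ ({α, β} : Set W) := by
          by_contra hcon
          push_neg at hcon
          obtain ⟨hq1, hq2⟩ := hcon
          simp only [Set.mem_insert_iff, Set.mem_singleton_iff] at hq1 hq2
          have hq' : (q.1, q.2) ∈ G := by simpa using hqG
          rcases hq1 with h1 | h1 <;> rcases hq2 with h2 | h2 <;> rw [h1, h2] at hq'
          · exact hdiag _ hq'
          · exact hαβG hq'
          · exact hβαG hq'
          · exact hdiag _ hq'
        rcases hkey with hk | hk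
        · have hz : f (e q.1) = 0 := by
            simp only [Set.mem_insert_iff, Set.mem_singleton_iff, not_or] at hk
            have hn1 : e q.1 ≠ e α := fun h => hk.1 (e.injective h)
            have hn2 : e q.1 ≠ e β := fun h => hk.2 (e.injective h)
            simp [hf, hn1, hn2]
          rw [hxapp, hxapp, hz]
          simpa using (habs (e q.2)).trans hc1
        · have hz : f (e q.2) = 0 := by
            simp only [Set.mem_insert_iff, Set.mem_singleton_iff, not_or] at hk
            have hn1 : e q.2 ≠ e α := fun h => hk.1 (e.injective h)
            have hn2 : e q.2 ≠ e β := fun h => hk.2 (e.injective h)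
            simp [hf, hn1, hn2]
          rw [hxapp, hxapp, hz]
          simpa using (habs (e q.1)).trans hc1
    · rw [hxapp, hfα, abs_of_nonneg hc0.le]; exact h2c
    · rw [hxapp, hfβ, abs_of_nonneg hc0.le]; exact h2c
    · intro ξ hξ
      constructor
      · rw [hxapp, hfα, abs_of_nonneg hc0.le, h2c]; exact hξ
      · rw [hxapp, hfβ, abs_of_nonneg hc0.le, h2c]; exact hξ
  · -- converse direction
    rintro hαβG ξ₁ hξ₁ ⟨x, y, hNle, h1, h2⟩
    have hβαG : (β, α) ∈ G := by
      rw [hG] at hαβG ⊢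
      simp only [Set.mem_setOf_eq] at *
      exact (aux_sym φ hφ hαβ).mp hαβG
    have hbdd : BddAbove ({‖x‖, ‖y‖} ∪
        {t : ℝ | ∃ q ∈ G, t = |x.1 (e q.1)| + |y.1 (e q.2)|}) := by
      refine ⟨‖x‖ + ‖y‖ + 1, ?_⟩
      rintro t (ht | ⟨q, hqG, rfl⟩)
      · rcases ht with rfl | rfl
        · have := norm_nonneg y; linarith
        · have := norm_nonneg x; linarith
      · have hxq : |x.1 (e q.1)| ≤ ‖x‖ := by
          have := lp.norm_apply_le_norm hp0 x (e q.1)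
          rwa [Real.norm_eq_abs] at this
        have hyq : |y.1 (e q.2)| ≤ ‖y‖ := by
          have := lp.norm_apply_le_norm hp0 y (e q.2)
          rwa [Real.norm_eq_abs] at this
        linarith
    have hNxy : sSup ({‖x‖, ‖y‖} ∪
        {t : ℝ | ∃ q ∈ G, t = |x.1 (e q.1)| + |y.1 (e q.2)|}) ≤ 1 := by
      rw [← hN]; exact hNle
    have hA : |x.1 (e α)| + |y.1 (e β)| ≤ 1 :=
      le_trans (le_csSup hbdd (Or.inr ⟨(α, β), hαβG, rfl⟩)) hNxy
    have hB : |x.1 (e β)| + |y.1 (e α)| ≤ 1 :=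
      le_trans (le_csSup hbdd (Or.inr ⟨(β, α), hβαG, rfl⟩)) hNxy
    linarith
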